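/- arXiv:2407.21147 — 3 statements merged into one kernel-verified Lean document; each statement's English description precedes it below -/
import Mathlib

section
/- Let p : E → C be a fibration of categories (cloven), let ℂ be a precategory in C with a reflexive coequalizer C₁ ⇉ C₀ → π₀(ℂ), and let P be a precategory in E lying over ℂ with all structure arrows cartesian, admitting a reflexive coequalizer P₁ ⇉ P₀ → π₀(P) in E. Then the image under p of the coequalizer diagram P₁ ⇉ P₀ → π₀(P) is a reflexive coequalizer diagram in C; in particular p(π₀(P)) ≅ π₀(ℂ). -/
/-!
**Statement 6.** Let `p : E ⥤ C` be a cloven fibration, `ℂ` a precategory in `C` with a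
reflexive coequaliser `C₁ ⇉ C₀ → π₀(ℂ)`, and `P` a precategory in `E` lying over `ℂ` with
all structure arrows cartesian, admitting a reflexive coequaliser `P₁ ⇉ P₀ → π₀(P)` in `E`.
Then the image under `p` of the coequaliser diagram `P₁ ⇉ P₀ → π₀(P)` is again a
coequaliser diagram in `C`; in particular `p(π₀(P)) ≅ π₀(ℂ)`.
-/

open CategoryTheory CategoryTheory.Limits

namespace DGal

universe v₁ u₁ v u

/-- An internal precategory in `C`. -/
structure Precat (C : Type u) [Category.{v} C] where
  C2 : C
  C1 : C
  C0 : C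
  r0 : C2 ⟶ C1
  r1 : C2 ⟶ C1
  m : C2 ⟶ C1
  d0 : C1 ⟶ C0
  d1 : C1 ⟶ C0
  n : C0 ⟶ C1
  hr : r1 ≫ d0 = r0 ≫ d1
  hn0 : n ≫ d0 = 𝟙 C0
  hn1 : n ≫ d1 = 𝟙 C0
  hm0 : m ≫ d0 = r0 ≫ d0
  hm1 : m ≫ d1 = r1 ≫ d1

variable {E : Type u₁} [Category.{v₁} E] {C : Type u} [Category.{v} C]

/-- A morphism `φ` in `E` is cartesian for the functor `p : E ⥤ C` if every morphism
into its target whose image factors through `p(φ)` factors uniquely through `φ`,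
compatibly with the chosen factorisation downstairs. -/
def IsCartesianArrow (p : E ⥤ C) {a b : E} (φ : a ⟶ b) : Prop :=
  ∀ ⦃c : E⦄ (ψ : c ⟶ b) (g : p.obj c ⟶ p.obj a),
    g ≫ p.map φ = p.map ψ → ∃! χ : c ⟶ a, χ ≫ φ = ψ ∧ p.map χ = g

/-- `p : E ⥤ C` is a cloven fibration: every morphism of `C` with a lift of its target
admits a cartesian lift. -/
def IsClovenFibration (p : E ⥤ C) : Prop :=
  ∀ (b : E) (X : C) (f : X ⟶ p.obj b), ∃ (a : E) (e : p.obj a = X) (φ : a ⟶ b),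
    IsCartesianArrow p φ ∧ p.map φ = eqToHom e ≫ f

/-- The image of a precategory in `E` under a functor `p : E ⥤ C`. -/
def mapPrecat (p : E ⥤ C) (P : Precat E) : Precat C where
  C2 := p.obj P.C2
  C1 := p.obj P.C1
  C0 := p.obj P.C0
  r0 := p.map P.r0
  r1 := p.map P.r1
  m := p.map P.m
  d0 := p.map P.d0
  d1 := p.map P.d1
  n := p.map P.n
  hr := by rw [← p.map_comp, ← p.map_comp, P.hr]
  hn0 := by rw [← p.map_comp, P.hn0, p.map_id]
  hn1 := by rw [← p.map_comp, P.hn1, p.map_id]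
  hm0 := by rw [← p.map_comp, ← p.map_comp, P.hm0]
  hm1 := by rw [← p.map_comp, ← p.map_comp, P.hm1]

end DGal

open DGal

theorem stmt_6 {E : Type u₁} [Category.{v₁} E] {C : Type u} [Category.{v} C]
    (p : E ⥤ C) (hp : IsClovenFibration p)
    (P : Precat E)
    (hcr0 : IsCartesianArrow p P.r0) (hcr1 : IsCartesianArrow p P.r1)
    (hcm : IsCartesianArrow p P.m) (hcd0 : IsCartesianArrow p P.d0)
    (hcd1 : IsCartesianArrow p P.d1) (hcn : IsCartesianArrow p P.n)
    -- the reflexive coequaliser `P₁ ⇉ P₀ → π₀(P)` in `E`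
    (Z : E) (ρ : P.C0 ⟶ Z) (hwE : P.d0 ≫ ρ = P.d1 ≫ ρ)
    (hE : IsColimit (Cofork.ofπ ρ hwE))
    -- the reflexive coequaliser `C₁ ⇉ C₀ → π₀(ℂ)` in `C` of the image precategory
    (W : C) (c : (mapPrecat p P).C0 ⟶ W)
    (hwC : (mapPrecat p P).d0 ≫ c = (mapPrecat p P).d1 ≫ c)
    (hC : IsColimit (Cofork.ofπ c hwC)) :
    Nonempty (IsColimit (Cofork.ofπ (p.map ρ)
      (show p.map P.d0 ≫ p.map ρ = p.map P.d1 ≫ p.map ρ by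
        rw [← p.map_comp, ← p.map_comp, hwE]))) ∧
    Nonempty (p.obj Z ≅ W) := by
  obtain ⟨c0, hc0⟩ : ∃ c0 : p.obj P.C0 ⟶ W, c0 = c := ⟨c, rfl⟩
  subst hc0
  rename' c0 => c
  have hwC' : p.map P.d0 ≫ c = p.map P.d1 ≫ c := hwC
  have hwC2 : p.map P.d0 ≫ p.map ρ = p.map P.d1 ≫ p.map ρ := by
    rw [← p.map_comp, ← p.map_comp, hwE]
  -- comparison map t : W ⟶ p(Z)
  obtain ⟨t, ht⟩ := Cofork.IsColimit.desc' hC (p.map ρ) hwC2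
  have ht : c ≫ t = p.map ρ := ht
  -- cartesian lift of t
  obtain ⟨a, e, φ, hφ, hpφ⟩ := hp Z W t
  have hφt : eqToHom e ≫ t = p.map φ := hpφ.symm
  -- factor ρ through φ
  obtain ⟨χ, ⟨hχ1, hχ2⟩, -⟩ := hφ ρ (c ≫ eqToHom e.symm) (by
    rw [hpφ, ← Category.assoc, Category.assoc _ _ (eqToHom e), eqToHom_trans,
      eqToHom_refl, Category.comp_id, ht])
  -- χ coequalises the pair
  have hdd : P.d0 ≫ χ = P.d1 ≫ χ := by
    obtain ⟨χ', -, huniq⟩ := hφ (P.d0 ≫ ρ) (p.map P.d0 ≫ c ≫ eqToHom e.symm) (by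
      rw [hpφ, Category.assoc, Category.assoc, ← Category.assoc (eqToHom e.symm),
        eqToHom_trans, eqToHom_refl, Category.id_comp, ht, p.map_comp])
    have h0 := huniq (P.d0 ≫ χ)
      ⟨by rw [Category.assoc, hχ1], by rw [p.map_comp, hχ2]⟩
    have h1 := huniq (P.d1 ≫ χ)
      ⟨by rw [Category.assoc, hχ1, hwE],
       by rw [p.map_comp, hχ2, ← Category.assoc, ← hwC', Category.assoc]⟩
    rw [h0, h1]
  -- section σ : Z ⟶ a
  obtain ⟨σ, hσ⟩ := Cofork.IsColimit.desc' hE χ hdd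
  have hσ : ρ ≫ σ = χ := hσ
  have hσφ : σ ≫ φ = 𝟙 Z := by
    apply Cofork.IsColimit.hom_ext hE
    simp only [Cofork.π_ofπ]
    rw [← Category.assoc, hσ, hχ1]; simp
  -- inverse of t
  set s : p.obj Z ⟶ W := p.map σ ≫ eqToHom e with hs
  have hρs : p.map ρ ≫ s = c := by
    rw [hs, ← Category.assoc, ← p.map_comp, hσ, hχ2, Category.assoc, eqToHom_trans,
      eqToHom_refl, Category.comp_id]
  have hst : s ≫ t = 𝟙 (p.obj Z) := by
    rw [hs, Category.assoc, hφt, ← p.map_comp, hσφ, p.map_id]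
  have hts : t ≫ s = 𝟙 W := by
    apply Cofork.IsColimit.hom_ext hC
    change c ≫ (t ≫ s) = c ≫ 𝟙 W
    rw [← Category.assoc, ht, hρs]; simp
  exact ⟨⟨IsColimit.ofIsoColimit hC (Cofork.ext (⟨t, s, hts, hst⟩ : W ≅ p.obj Z) ht)⟩,
    ⟨⟨s, t, hst, hts⟩⟩⟩
end

section
/- Let (X, δ_X) be a differential scheme that is simple with respect to Zariski open immersions, with categorical scheme of leaves given by the coequalizer X₁ ⇉ X₀ → π₀(X). Then the pushforward along η : X₀ → π₀(X) of the sheaf of constants of (O_X, δ_X) is the structure sheaf of π₀(X): η_* Const(O_X, δ_X) = O_{π₀(X)}. -/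
/-!
**Statement 9.** Let `(X, δ_X)` be a differential scheme which is simple with respect to
Zariski open immersions, with categorical scheme of leaves given by the coequaliser
`X₁ ⇉ X₀ → π₀(X)` (here `X₁` is the dual-numbers thickening of `X` encoding the
derivation, with projections `d₀, d₁`).  Then the pushforward along `η : X₀ ⟶ π₀(X)` of
the sheaf of constants of `(𝒪_X, δ_X)` is the structure sheaf of `π₀(X)`:
`η_* Const(𝒪_X, δ_X) = 𝒪_{π₀(X)}`, i.e. for every open `V ⊆ π₀(X)` the canonical map
`Γ(π₀(X), V) → Γ(X, η⁻¹V)` is injective with image the constants.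
-/

open CategoryTheory CategoryTheory.Limits AlgebraicGeometry

namespace DGal

/-- A derivation of the structure sheaf of a scheme: an additive Leibniz operator on
sections, compatible with restriction. -/
structure SheafDerivation (X : Scheme.{0}) where
  d : ∀ U : X.Opens, Γ(X, U) → Γ(X, U)
  map_add : ∀ (U : X.Opens) (a b : Γ(X, U)), d U (a + b) = d U a + d U b
  leibniz : ∀ (U : X.Opens) (a b : Γ(X, U)), d U (a * b) = a * d U b + b * d U a
  compat : ∀ (U V : X.Opens) (h : V ≤ U) (a : Γ(X, U)),
    d V (X.presheaf.map (homOfLE h).op a) = X.presheaf.map (homOfLE h).op (d U a)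

variable {X Y X₁ : Scheme.{0}} (η : X ⟶ Y) (d0 d1 : X₁ ⟶ X)
  (hcoeq : d0 ≫ η = d1 ≫ η)

/-- The first leg of the base change of `X₁ ⇉ X₀ → Y` along `q : Q ⟶ Y`. -/
noncomputable def bcLeg0 {Q : Scheme.{0}} (q : Q ⟶ Y) :
    pullback (d0 ≫ η) q ⟶ pullback η q :=
  pullback.map (d0 ≫ η) q η q d0 (𝟙 Q) (𝟙 Y) (by simp) (by simp)

/-- The second leg of the base change of `X₁ ⇉ X₀ → Y` along `q : Q ⟶ Y`. -/
noncomputable def bcLeg1 {Q : Scheme.{0}} (q : Q ⟶ Y) :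
    pullback (d0 ≫ η) q ⟶ pullback η q :=
  pullback.map (d0 ≫ η) q η q d1 (𝟙 Q) (𝟙 Y)
    (by rw [Category.comp_id, hcoeq]) (by simp)

/-- The base change of the coequaliser diagram `X₁ ⇉ X₀ → Y` along `q : Q ⟶ Y`,
as a cofork with vertex `Q`. -/
noncomputable def bcCofork {Q : Scheme.{0}} (q : Q ⟶ Y) :
    Cofork (bcLeg0 η d0 q) (bcLeg1 η d0 d1 hcoeq q) :=
  Cofork.ofπ (pullback.snd η q) (by
    simp only [bcLeg0, bcLeg1]
    rw [pullback.lift_snd, pullback.lift_snd])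

end DGal

open DGal Opposite Polynomial

/-! ### Auxiliary material for the proof -/

namespace DGal

/-- Elementwise congruence for ring maps. -/
lemma happ {R S : CommRingCat.{0}} {f g : R ⟶ S} (h : f = g) (x : R) : f x = g x := by
  rw [h]

lemma bijective_of_iso {R S : CommRingCat.{0}} (φ : R ⟶ S) [IsIso φ] :
    Function.Bijective φ := by
  constructor
  · intro x y hxy
    have h2 := congrArg (inv φ) hxy
    rwa [← CommRingCat.comp_apply, ← CommRingCat.comp_apply, IsIso.hom_inv_id,
      CommRingCat.id_apply, CommRingCat.id_apply] at h2
  · intro y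
    refine ⟨inv φ y, ?_⟩
    rw [← CommRingCat.comp_apply, IsIso.inv_hom_id, CommRingCat.id_apply]

/-- Congruence in the morphism argument of `appLE`. -/
lemma appLE_congr_hom {W Z : Scheme.{0}} {f g : W ⟶ Z} (h : f = g) (U : Z.Opens)
    (Vo : W.Opens) (e : Vo ≤ f ⁻¹ᵁ U) :
    f.appLE U Vo e = g.appLE U Vo (h ▸ e) := by
  subst h; rfl

lemma appTop_eq_appLE {W Z : Scheme.{0}} (f : W ⟶ Z) :
    f.appTop = f.appLE ⊤ ⊤ le_top := by
  show f.app ⊤ = f.appLE ⊤ ⊤ le_top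
  rw [Scheme.Hom.app_eq_appLE]
  exact rfl

lemma isIso_appLE_top {W Z : Scheme.{0}} (f : W ⟶ Z) [IsIso f] :
    IsIso (f.appLE ⊤ ⊤ le_top) := by
  rw [← appTop_eq_appLE]
  show IsIso (f.app ⊤)
  infer_instance

/-- The affine line over `ℤ`. -/
noncomputable def AffLine : Scheme.{0} := Spec (CommRingCat.of (Polynomial ℤ))

/-- The global section corresponding to a morphism to the affine line. -/
noncomputable def secOf {W : Scheme.{0}} (g : W ⟶ AffLine) : Γ(W, ⊤) :=
  g.appTop ((Scheme.ΓSpecIso (CommRingCat.of (Polynomial ℤ))).inv Polynomial.X)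

lemma secOf_comp {W W' : Scheme.{0}} (f : W' ⟶ W) (g : W ⟶ AffLine) :
    secOf (f ≫ g) = f.appTop (secOf g) := by
  simp [secOf, Scheme.Hom.comp_appTop]
  rfl

lemma secOf_comp' {W W' : Scheme.{0}} (f : W' ⟶ W) (g : W ⟶ AffLine) :
    secOf (f ≫ g) = f.appLE ⊤ ⊤ le_top (secOf g) := by
  rw [secOf_comp, appTop_eq_appLE]

lemma secOf_injective {W : Scheme.{0}} : Function.Injective (secOf (W := W)) := by
  intro g g' h
  have hval : ∀ k : W ⟶ AffLine,
      ((ΓSpec.adjunction.homEquiv W (op (CommRingCat.of (Polynomial ℤ)))).symm k).unop =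
        (Scheme.ΓSpecIso (CommRingCat.of (Polynomial ℤ))).inv ≫ k.appTop := by
    intro k
    erw [Adjunction.homEquiv_counit]
    simp [ΓSpec.adjunction_counit_app]
    rfl
  apply (ΓSpec.adjunction.homEquiv W (op (CommRingCat.of (Polynomial ℤ)))).symm.injective
  apply Quiver.Hom.unop_inj
  rw [hval, hval]
  ext : 1
  apply Polynomial.ringHom_ext
  · intro n; simp [Polynomial.C_eq_intCast, map_intCast]
  · exact h

/-- The morphism to the affine line corresponding to a global section. -/
noncomputable def toA {W : Scheme.{0}} (s : Γ(W, ⊤)) : W ⟶ AffLine :=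
  ΓSpec.adjunction.homEquiv W (op (CommRingCat.of (Polynomial ℤ)))
    (Quiver.Hom.op (show CommRingCat.of (Polynomial ℤ) ⟶ Γ(W, ⊤) from
      CommRingCat.ofHom (Polynomial.eval₂RingHom (Int.castRingHom _) s)))

lemma secOf_toA {W : Scheme.{0}} (s : Γ(W, ⊤)) : secOf (toA s) = s := by
  unfold secOf toA
  erw [ΓSpec_adjunction_homEquiv_eq]
  have h : (Scheme.ΓSpecIso (CommRingCat.of (Polynomial ℤ))).hom
      ((Scheme.ΓSpecIso (CommRingCat.of (Polynomial ℤ))).inv Polynomial.X) = Polynomial.X :=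
    congrArg
      (fun f : CommRingCat.of (Polynomial ℤ) ⟶ CommRingCat.of (Polynomial ℤ) => f Polynomial.X)
      (Scheme.ΓSpecIso (CommRingCat.of (Polynomial ℤ))).inv_hom_id
  show (eval₂RingHom (Int.castRingHom ((Γ(W, ⊤) : CommRingCat) : Type)) s)
      ((Scheme.ΓSpecIso (CommRingCat.of (Polynomial ℤ))).hom
        ((Scheme.ΓSpecIso (CommRingCat.of (Polynomial ℤ))).inv Polynomial.X)) = s
  rw [h]
  simp

/-- The whole pullback along the inclusion of an open lies over the preimage. -/
lemma top_le_fst_preimage {W Z : Scheme.{0}} (f : W ⟶ Z) (V : Z.Opens) :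
    (⊤ : (pullback f V.ι).Opens) ≤ (pullback.fst f V.ι) ⁻¹ᵁ (f ⁻¹ᵁ V) := by
  intro x _
  show f.base ((pullback.fst f V.ι).base x) ∈ V
  have hx : (pullback.fst f V.ι ≫ f).base x = (pullback.snd f V.ι ≫ V.ι).base x := by
    rw [pullback.condition]
  rw [Scheme.Hom.comp_apply, Scheme.Hom.comp_apply] at hx
  rw [hx]
  have hm : V.ι.base ((pullback.snd f V.ι).base x) ∈ Set.range V.ι.base :=
    Set.mem_range_self _
  rwa [V.range_ι] at hm

end DGal

theorem stmt_9
    (X Y X₁ : Scheme.{0}) (η : X ⟶ Y) (δ : SheafDerivation X)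
    (d0 d1 : X₁ ⟶ X)
    (hpre : ∀ U : X.Opens, d0 ⁻¹ᵁ U = d1 ⁻¹ᵁ U)
    (hδ : ∀ (U : X.Opens) (a : Γ(X, U)),
      d0.app U a = X₁.presheaf.map (eqToHom (hpre U)).op (d1.app U a) ↔ δ.d U a = 0)
    (hcoeq : d0 ≫ η = d1 ≫ η)
    (hπ : Nonempty (IsColimit (Cofork.ofπ η hcoeq)))
    (hsimple : ∀ V : Y.Opens,
      Nonempty (IsColimit (bcCofork η d0 d1 hcoeq V.ι))) :
    ∀ V : Y.Opens,
      Function.Injective (η.app V) ∧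
      Set.range (η.app V) = {a : Γ(X, η ⁻¹ᵁ V) | δ.d (η ⁻¹ᵁ V) a = 0} := by
  intro V
  obtain ⟨hc⟩ := hsimple V
  set U : X.Opens := η ⁻¹ᵁ V with hUdef
  -- preimage facts
  have eP : (⊤ : (pullback η V.ι).Opens) ≤ (pullback.fst η V.ι) ⁻¹ᵁ U :=
    top_le_fst_preimage η V
  have e₀ : (⊤ : (pullback (d0 ≫ η) V.ι).Opens) ≤
      (pullback.fst (d0 ≫ η) V.ι) ⁻¹ᵁ (d0 ⁻¹ᵁ U) :=
    top_le_fst_preimage (d0 ≫ η) V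
  have e₁ : (⊤ : (pullback (d0 ≫ η) V.ι).Opens) ≤
      (pullback.fst (d0 ≫ η) V.ι) ⁻¹ᵁ (d1 ⁻¹ᵁ U) := (hpre U) ▸ e₀
  -- the two comparison maps on sections
  set αm : Γ(X, U) ⟶ Γ(pullback η V.ι, ⊤) :=
    (pullback.fst η V.ι).appLE U ⊤ eP with hαm
  set ρ : Γ(Y, V) ⟶ Γ(V.toScheme, ⊤) := V.ι.appLE V ⊤ V.ι_preimage_self.ge with hρ
  have hρbij : Function.Bijective ρ := bijective_of_iso ρ
  -- injectivity of αm
  have hαinj : Function.Injective αm := by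
    have hdec : (η ⁻¹ᵁ V).ι.appLE (η ⁻¹ᵁ V) ⊤ (η ⁻¹ᵁ V).ι_preimage_self.ge ≫
        (pullbackRestrictIsoRestrict η V).hom.appLE ⊤ ⊤ le_top = αm := by
      rw [Scheme.Hom.appLE_comp_appLE (e₂ := le_top)]
      exact (appLE_congr_hom (pullbackRestrictIsoRestrict_hom_ι η V) _ _ _)
    have h1 : Function.Injective
        ((η ⁻¹ᵁ V).ι.appLE (η ⁻¹ᵁ V) ⊤ (η ⁻¹ᵁ V).ι_preimage_self.ge) :=
      (bijective_of_iso _).1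
    have h2 : Function.Injective
        ((pullbackRestrictIsoRestrict η V).hom.appLE ⊤ ⊤ le_top) := by
      have := isIso_appLE_top (pullbackRestrictIsoRestrict η V).hom
      exact (bijective_of_iso _).1
    intro x y hxy
    have ex := happ hdec x
    have ey := happ hdec y
    rw [CommRingCat.comp_apply] at ex ey
    exact h1 (h2 (by rw [ex, ey, hxy]))
  -- the key compatibility: restriction to V followed by pullback = η.app then αm
  have hstar : ρ ≫ (pullback.snd η V.ι).appLE ⊤ ⊤ le_top = η.app V ≫ αm := by
    rw [hρ, Scheme.Hom.appLE_comp_appLE (e₂ := le_top), hαm, Scheme.Hom.app_eq_appLE, Scheme.Hom.appLE_comp_appLE]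
    exact (appLE_congr_hom pullback.condition _ _ _).symm
  -- the legs on sections
  have hleg0 : αm ≫ (bcLeg0 η d0 V.ι).appLE ⊤ ⊤ le_top =
      d0.app U ≫ (pullback.fst (d0 ≫ η) V.ι).appLE (d0 ⁻¹ᵁ U) ⊤ e₀ := by
    rw [hαm, Scheme.Hom.appLE_comp_appLE (e₂ := le_top),
      appLE_congr_hom (show bcLeg0 η d0 V.ι ≫ pullback.fst η V.ι =
        pullback.fst (d0 ≫ η) V.ι ≫ d0 by simp [bcLeg0, pullback.lift_fst]) _ _ _,
      Scheme.Hom.comp_appLE]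
  have hleg1 : αm ≫ (bcLeg1 η d0 d1 hcoeq V.ι).appLE ⊤ ⊤ le_top =
      d1.app U ≫ (pullback.fst (d0 ≫ η) V.ι).appLE (d1 ⁻¹ᵁ U) ⊤ e₁ := by
    rw [hαm, Scheme.Hom.appLE_comp_appLE (e₂ := le_top),
      appLE_congr_hom (show bcLeg1 η d0 d1 hcoeq V.ι ≫ pullback.fst η V.ι =
        pullback.fst (d0 ≫ η) V.ι ≫ d1 by simp [bcLeg1, pullback.lift_fst]) _ _ _,
      Scheme.Hom.comp_appLE]
  have hπeq : (bcCofork η d0 d1 hcoeq V.ι).π = pullback.snd η V.ι := rfl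
  constructor
  · -- injectivity
    intro a b hab
    have h1 : toA (ρ a) = toA (ρ b) := by
      apply Cofork.IsColimit.hom_ext hc
      rw [hπeq]
      apply secOf_injective
      show secOf (pullback.snd η V.ι ≫ toA (ρ a)) = secOf (pullback.snd η V.ι ≫ toA (ρ b))
      rw [secOf_comp', secOf_comp', secOf_toA, secOf_toA]
      calc (pullback.snd η V.ι).appLE ⊤ ⊤ le_top (ρ a)
          = αm (η.app V a) := happ hstar a
        _ = αm (η.app V b) := by rw [hab]
        _ = (pullback.snd η V.ι).appLE ⊤ ⊤ le_top (ρ b) := (happ hstar b).symm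
    have h2 : ρ a = ρ b := by
      have h3 := congrArg secOf h1
      rwa [secOf_toA, secOf_toA] at h3
    exact hρbij.1 h2
  · -- range is the constants
    ext a
    simp only [Set.mem_range, Set.mem_setOf_eq]
    constructor
    · rintro ⟨b, rfl⟩
      rw [← hδ]
      have m : η.app V ≫ d0.app U =
          η.app V ≫ d1.app U ≫ X₁.presheaf.map (eqToHom (hpre U)).op := by
        rw [d0.app_eq_appLE, d1.app_eq_appLE, Scheme.Hom.appLE_map]
        erw [← Scheme.Hom.comp_appLE d0 η V, ← Scheme.Hom.comp_appLE d1 η V]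
        exact appLE_congr_hom hcoeq _ _ _
      exact happ m b
    · intro ha
      have hd : d0.app U a = X₁.presheaf.map (eqToHom (hpre U)).op (d1.app U a) :=
        (hδ U a).mpr ha
      have hw : bcLeg0 η d0 V.ι ≫ toA (αm a) = bcLeg1 η d0 d1 hcoeq V.ι ≫ toA (αm a) := by
        apply secOf_injective
        rw [secOf_comp', secOf_comp', secOf_toA]
        calc (bcLeg0 η d0 V.ι).appLE ⊤ ⊤ le_top (αm a)
            = (pullback.fst (d0 ≫ η) V.ι).appLE (d0 ⁻¹ᵁ U) ⊤ e₀ (d0.app U a) := happ hleg0 a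
          _ = (pullback.fst (d0 ≫ η) V.ι).appLE (d0 ⁻¹ᵁ U) ⊤ e₀
                (X₁.presheaf.map (eqToHom (hpre U)).op (d1.app U a)) := by rw [hd]
          _ = (pullback.fst (d0 ≫ η) V.ι).appLE (d1 ⁻¹ᵁ U) ⊤ e₁ (d1.app U a) :=
              happ (Scheme.Hom.map_appLE _ e₀ (eqToHom (hpre U)).op) (d1.app U a)
          _ = (bcLeg1 η d0 d1 hcoeq V.ι).appLE ⊤ ⊤ le_top (αm a) := (happ hleg1 a).symm
      obtain ⟨b, hb⟩ := hρbij.2 (secOf (Cofork.IsColimit.desc hc (toA (αm a)) hw))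
      refine ⟨b, hαinj ?_⟩
      calc αm (η.app V b) = (pullback.snd η V.ι).appLE ⊤ ⊤ le_top (ρ b) := (happ hstar b).symm
        _ = (pullback.snd η V.ι).appLE ⊤ ⊤ le_top
              (secOf (Cofork.IsColimit.desc hc (toA (αm a)) hw)) := by rw [hb]
        _ = secOf (pullback.snd η V.ι ≫ Cofork.IsColimit.desc hc (toA (αm a)) hw) :=
              (secOf_comp' _ _).symm
        _ = secOf (toA (αm a)) := by
              rw [show pullback.snd η V.ι ≫ Cofork.IsColimit.desc hc (toA (αm a)) hw =
                toA (αm a) from Cofork.IsColimit.π_desc' hc _ hw]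
        _ = αm a := secOf_toA _
end

section
/- Let (X, δ) be a differential scheme simple with respect to Zariski open immersions with leaf space coequalizer X₁ ⇉ X₀ →^η π₀(X). Let L, L' be invertible sheaves on π₀(X) and α : η*L → η*L' an isomorphism of O_{X₀}-modules such that d₀*α and d₁*α agree (up to the canonical coherence isomorphisms) on X₁. Then there exists a unique isomorphism σ : L → L' with α = η*σ. -/
/-!
**Statement 9.** Let `(X, δ_X)` be a differential scheme which is simple with respect to
Zariski open immersions, with categorical scheme of leaves given by the coequaliser
`X₁ ⇉ X₀ → π₀(X)` (here `X₁` is the dual-numbers thickening of `X` encoding the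
derivation, with projections `d₀, d₁`).  Then the pushforward along `η : X₀ ⟶ π₀(X)` of
the sheaf of constants of `(𝒪_X, δ_X)` is the structure sheaf of `π₀(X)`:
`η_* Const(𝒪_X, δ_X) = 𝒪_{π₀(X)}`, i.e. for every open `V ⊆ π₀(X)` the canonical map
`Γ(π₀(X), V) → Γ(X, η⁻¹V)` is injective with image the constants.
-/

open CategoryTheory CategoryTheory.Limits AlgebraicGeometry

open DGal

noncomputable section
namespace DGalAux
open DGal

abbrev PZ : CommRingCat.{0} := CommRingCat.of (Polynomial ℤ)
abbrev Aone : Scheme.{0} := Spec PZ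

def Tsec : Γ(Aone, ⊤) := (Scheme.ΓSpecIso PZ).inv Polynomial.X

def polyHom {Z : Scheme.{0}} (s : Γ(Z, ⊤)) : PZ ⟶ Γ(Z, ⊤) :=
  CommRingCat.ofHom (Polynomial.aeval (R := ℤ) s).toRingHom

def toA {Z : Scheme.{0}} (s : Γ(Z, ⊤)) : Z ⟶ Aone :=
  ΓSpec.adjunction.homEquiv Z (Opposite.op PZ) (Quiver.Hom.op (polyHom s))

@[simp] lemma toA_appTop_Tsec {Z : Scheme.{0}} (s : Γ(Z, ⊤)) :
    (toA s).appTop Tsec = s := by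
  have := ΓSpec_adjunction_homEquiv_eq (X := Z) (polyHom s)
  unfold toA; erw [this]
  show (polyHom s) ((Scheme.ΓSpecIso PZ).hom ((Scheme.ΓSpecIso PZ).inv _)) = s
  erw [Iso.inv_hom_id_apply]
  exact Polynomial.aeval_X s

lemma hom_to_Aone_ext {Z : Scheme.{0}} {f g : Z ⟶ Aone}
    (h : f.appTop Tsec = g.appTop Tsec) : f = g := by
  apply (ΓSpec.adjunction.homEquiv Z (Opposite.op PZ)).symm.injective
  rw [Adjunction.homEquiv_counit, Adjunction.homEquiv_counit]
  have : f.appTop = g.appTop := by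
    have h2 : (Scheme.ΓSpecIso PZ).inv ≫ f.appTop = (Scheme.ΓSpecIso PZ).inv ≫ g.appTop := by
      apply CommRingCat.hom_ext
      apply Polynomial.ringHom_ext
      · intro n; simp
      · simpa [Tsec] using h
    rwa [Iso.cancel_iso_inv_left] at h2
  show (Scheme.Γ.rightOp.map f) ≫ _ = (Scheme.Γ.rightOp.map g) ≫ _
  congr 1
  simp only [Scheme.Γ, Functor.rightOp_map]
  congr 1

lemma comp_appTop_apply {Z W : Scheme.{0}} (g : Z ⟶ W) {A : Scheme.{0}} (f : W ⟶ A)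
    (x : Γ(A, ⊤)) : (g ≫ f).appTop x = g.appTop (f.appTop x) := by
  rw [Scheme.Hom.comp_appTop]; rfl

lemma comp_toA {Z W : Scheme.{0}} (g : Z ⟶ W) (s : Γ(W, ⊤)) :
    g ≫ toA s = toA (g.appTop s) := by
  apply hom_to_Aone_ext
  rw [comp_appTop_apply, toA_appTop_Tsec, toA_appTop_Tsec]

lemma appLE_hom_congr {Z W : Scheme.{0}} {f g : Z ⟶ W} (h : f = g) (U : W.Opens) (V : Z.Opens)
    (e : V ≤ f ⁻¹ᵁ U) : f.appLE U V e = g.appLE U V (h ▸ e) := by subst h; rfl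

/-- the canonical iso `Γ(X, U) → Γ(U, ⊤)` as `appLE` -/
abbrev secUp {Z : Scheme.{0}} (U : Z.Opens) : Γ(Z, U) ⟶ Γ(U.toScheme, ⊤) :=
  U.ι.appLE U ⊤ U.ι_preimage_self.ge

lemma top_le_comp_preimage {Z W : Scheme.{0}} {U : W.Opens} (m : Z ⟶ U.toScheme) :
    (⊤ : Z.Opens) ≤ (m ≫ U.ι) ⁻¹ᵁ U := by
  rw [Scheme.Hom.comp_preimage, Scheme.Opens.ι_preimage_self]
  exact le_of_eq (by simp)

lemma appTop_secUp {Z W : Scheme.{0}} {U : W.Opens} (m : Z ⟶ U.toScheme) (s : Γ(W, U)) :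
    m.appTop (secUp U s) = (m ≫ U.ι).appLE U ⊤ (top_le_comp_preimage m) s := by
  have : secUp U ≫ m.appTop = (m ≫ U.ι).appLE U ⊤ (top_le_comp_preimage m) := by
    rw [Scheme.Hom.appTop, Scheme.Hom.app_eq_appLE]; exact Scheme.Hom.appLE_comp_appLE _ _ _ _ _ _ _
  rw [← this]; rfl

/-- key computation: restricting `η` and applying to an upped section -/
lemma etaRes_appTop {X Y : Scheme.{0}} (η : X ⟶ Y) (W : Y.Opens) (b : Γ(Y, W)) :
    (η ∣_ W).appTop (secUp W b) = secUp (η ⁻¹ᵁ W) (η.app W b) := by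
  rw [appTop_secUp (η ∣_ W) b,
    appLE_hom_congr (morphismRestrict_ι η W) W ⊤ _]
  rw [show ((η ⁻¹ᵁ W).ι ≫ η).appLE W ⊤ _ =
      η.appLE W (η ⁻¹ᵁ W) le_rfl ≫ (η ⁻¹ᵁ W).ι.appLE (η ⁻¹ᵁ W) ⊤ (η ⁻¹ᵁ W).ι_preimage_self.ge
    from (Scheme.Hom.appLE_comp_appLE _ _ _ _ _ _ _).symm]
  rw [Scheme.Hom.appLE_eq_app]
  rfl

lemma secUp_injective {Z : Scheme.{0}} (U : Z.Opens) : Function.Injective (secUp U) := by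
  have : IsIso (secUp U) := inferInstance
  exact (asIso (secUp U)).commRingCatIsoToRingEquiv.injective

lemma eta_app_injective {X Y X₁ : Scheme.{0}} (η : X ⟶ Y) (d0 d1 : X₁ ⟶ X)
    (hcoeq : d0 ≫ η = d1 ≫ η) (W : Y.Opens)
    (hW : Nonempty (IsColimit (bcCofork η d0 d1 hcoeq W.ι))) :
    Function.Injective (η.app W) := by
  intro b b' hbb
  have key : toA (secUp W b) = toA (secUp W b') := by
    obtain ⟨c⟩ := hW
    refine Cofork.IsColimit.hom_ext c ?_
    have hπ : (bcCofork η d0 d1 hcoeq W.ι).π = pullback.snd η W.ι := rfl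
    rw [hπ, ← pullbackRestrictIsoRestrict_hom_morphismRestrict η W]
    have e : η ∣_ W ≫ toA (secUp W b) = η ∣_ W ≫ toA (secUp W b') := by
      rw [comp_toA (η ∣_ W) (secUp W b), comp_toA (η ∣_ W) (secUp W b'),
        etaRes_appTop η W b, etaRes_appTop η W b', hbb]
    exact (Category.assoc _ _ _).trans ((congrArg ((pullbackRestrictIsoRestrict η W).hom ≫ ·) e).trans
      (Category.assoc _ _ _).symm)
  have h2 : secUp W b = secUp W b' := by
    simpa using congrArg (fun f => Scheme.Hom.appTop f Tsec) key
  exact secUp_injective W h2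

lemma eta_app_descent {X Y X₁ : Scheme.{0}} (η : X ⟶ Y) (d0 d1 : X₁ ⟶ X)
    (hpre : ∀ U : X.Opens, d0 ⁻¹ᵁ U = d1 ⁻¹ᵁ U)
    (hcoeq : d0 ≫ η = d1 ≫ η) (W : Y.Opens)
    (hW : Nonempty (IsColimit (bcCofork η d0 d1 hcoeq W.ι)))
    (s : Γ(X, η ⁻¹ᵁ W))
    (hs : d0.app (η ⁻¹ᵁ W) s
      = X₁.presheaf.map (eqToHom (hpre (η ⁻¹ᵁ W))).op (d1.app (η ⁻¹ᵁ W) s)) :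
    ∃ b : Γ(Y, W), η.app W b = s := by
  obtain ⟨c⟩ := hW
  have h0 : (bcLeg0 η d0 W.ι ≫ (pullbackRestrictIsoRestrict η W).hom) ≫ (η ⁻¹ᵁ W).ι
      = pullback.fst (d0 ≫ η) W.ι ≫ d0 := by
    rw [Category.assoc, pullbackRestrictIsoRestrict_hom_ι]
    simp only [bcLeg0, pullback.map]; exact pullback.lift_fst _ _ _
  have h1 : (bcLeg1 η d0 d1 hcoeq W.ι ≫ (pullbackRestrictIsoRestrict η W).hom) ≫ (η ⁻¹ᵁ W).ι
      = pullback.fst (d0 ≫ η) W.ι ≫ d1 := by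
    rw [Category.assoc, pullbackRestrictIsoRestrict_hom_ι]
    simp only [bcLeg1, pullback.map]; exact pullback.lift_fst _ _ _
  have e0 : (⊤ : (pullback (d0 ≫ η) W.ι).Opens)
      ≤ pullback.fst (d0 ≫ η) W.ι ⁻¹ᵁ (d0 ⁻¹ᵁ (η ⁻¹ᵁ W)) := by
    rw [← Scheme.Hom.comp_preimage, ← h0]; exact top_le_comp_preimage _
  have e1 : (⊤ : (pullback (d0 ≫ η) W.ι).Opens)
      ≤ pullback.fst (d0 ≫ η) W.ι ⁻¹ᵁ (d1 ⁻¹ᵁ (η ⁻¹ᵁ W)) := by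
    rw [← Scheme.Hom.comp_preimage, ← h1]; exact top_le_comp_preimage _
  have hmain : (pullback.fst (d0 ≫ η) W.ι).appLE (d0 ⁻¹ᵁ (η ⁻¹ᵁ W)) ⊤ e0 (d0.app (η ⁻¹ᵁ W) s)
      = (pullback.fst (d0 ≫ η) W.ι).appLE (d1 ⁻¹ᵁ (η ⁻¹ᵁ W)) ⊤ e1 (d1.app (η ⁻¹ᵁ W) s) := by
    rw [hs]
    have hm := ConcreteCategory.congr_hom
      (Scheme.Hom.map_appLE (pullback.fst (d0 ≫ η) W.ι) e0 (eqToHom (hpre (η ⁻¹ᵁ W))).op)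
      (d1.app (η ⁻¹ᵁ W) s)
    rw [CategoryTheory.comp_apply] at hm
    exact hm
  have hFork : bcLeg0 η d0 W.ι ≫ ((pullbackRestrictIsoRestrict η W).hom ≫ toA (secUp (η ⁻¹ᵁ W) s))
      = bcLeg1 η d0 d1 hcoeq W.ι ≫ ((pullbackRestrictIsoRestrict η W).hom ≫ toA (secUp (η ⁻¹ᵁ W) s)) := by
    rw [← Category.assoc, ← Category.assoc, comp_toA, comp_toA]
    congr 1
    rw [appTop_secUp (bcLeg0 η d0 W.ι ≫ (pullbackRestrictIsoRestrict η W).hom) s,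
      appTop_secUp (bcLeg1 η d0 d1 hcoeq W.ι ≫ (pullbackRestrictIsoRestrict η W).hom) s,
      appLE_hom_congr h0 (η ⁻¹ᵁ W) ⊤ _, appLE_hom_congr h1 (η ⁻¹ᵁ W) ⊤ _,
      ← Scheme.Hom.appLE_comp_appLE (pullback.fst (d0 ≫ η) W.ι) d0 (η ⁻¹ᵁ W)
        (d0 ⁻¹ᵁ (η ⁻¹ᵁ W)) ⊤ le_rfl e0,
      ← Scheme.Hom.appLE_comp_appLE (pullback.fst (d0 ≫ η) W.ι) d1 (η ⁻¹ᵁ W)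
        (d1 ⁻¹ᵁ (η ⁻¹ᵁ W)) ⊤ le_rfl e1,
      Scheme.Hom.appLE_eq_app, Scheme.Hom.appLE_eq_app,
      CategoryTheory.comp_apply, CategoryTheory.comp_apply]
    exact hmain
  have hdesc : pullback.snd η W.ι ≫ Cofork.IsColimit.desc c _ hFork
      = (pullbackRestrictIsoRestrict η W).hom ≫ toA (secUp (η ⁻¹ᵁ W) s) := by
    have := Cofork.IsColimit.π_desc' c _ hFork
    simpa [bcCofork] using this
  have hres : (η ∣_ W) ≫ Cofork.IsColimit.desc c _ hFork = toA (secUp (η ⁻¹ᵁ W) s) := by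
    have hmr : η ∣_ W = (pullbackRestrictIsoRestrict η W).inv ≫ pullback.snd η W.ι := rfl
    erw [hmr, Category.assoc, hdesc, ← Category.assoc, Iso.inv_hom_id, Category.id_comp]
  refine ⟨inv (secUp W) ((Cofork.IsColimit.desc c _ hFork).appTop Tsec), secUp_injective _ ?_⟩
  have h3 : secUp W (inv (secUp W) ((Cofork.IsColimit.desc c _ hFork).appTop Tsec))
      = (Cofork.IsColimit.desc c _ hFork).appTop Tsec := by
    have hin : IsIso (secUp W) := inferInstance
    have hm := ConcreteCategory.congr_hom (IsIso.inv_hom_id (secUp W))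
      ((Cofork.IsColimit.desc c _ hFork).appTop Tsec)
    erw [CategoryTheory.comp_apply] at hm
    exact hm
  rw [← etaRes_appTop η W, h3]
  have h4 : ((η ∣_ W) ≫ Cofork.IsColimit.desc c _ hFork).appTop Tsec = secUp (η ⁻¹ᵁ W) s := by
    rw [hres, toA_appTop_Tsec]
  exact (comp_appTop_apply _ _ _).symm.trans h4

end DGalAux
end

open DGalAux


/-- Let `(X, δ)` be a differential scheme, simple with respect to
Zariski open immersions, with leaf space coequaliser `X₁ ⇉ X₀ →η π₀(X) = Y`.  Let `L, L'`
be invertible sheaves on `Y`, presented by transition functions `g, g'` on a common open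
cover `V : ι → Y.Opens`, and let `α : η^*L ≅ η^*L'` be an isomorphism of `𝒪_X`-modules,
presented by units `a i` on `η⁻¹(V i)` compatible with the transition functions, such that
`d₀^*α = d₁^*α` (equivalently, `δ(a i) = 0` for all `i`).  Then `α` descends uniquely: there
is a unique isomorphism `σ : L ≅ L'`, given by sections `b i` on `V i` compatible with the
transition functions, with `α = η^*σ`. -/
theorem stmt_10
    (X Y X₁ : Scheme.{0}) (η : X ⟶ Y) (δ : SheafDerivation X)
    (d0 d1 : X₁ ⟶ X)
    (hpre : ∀ U : X.Opens, d0 ⁻¹ᵁ U = d1 ⁻¹ᵁ U)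
    (hδ : ∀ (U : X.Opens) (a : Γ(X, U)),
      d0.app U a = X₁.presheaf.map (eqToHom (hpre U)).op (d1.app U a) ↔ δ.d U a = 0)
    (hcoeq : d0 ≫ η = d1 ≫ η)
    (hπ : Nonempty (IsColimit (Cofork.ofπ η hcoeq)))
    (hsimple : ∀ V : Y.Opens,
      Nonempty (IsColimit (bcCofork η d0 d1 hcoeq V.ι)))
    -- an open cover of `Y`
    (ι : Type) (V : ι → Y.Opens) (hcover : iSup V = ⊤)
    -- the invertible sheaves `L` and `L'`, given by transition functions on the cover
    (g g' : ∀ i j : ι, Γ(Y, V i ⊓ V j))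
    (hg : ∀ i j, IsUnit (g i j)) (hg' : ∀ i j, IsUnit (g' i j))
    (hgcoc : ∀ i j l : ι,
      Y.presheaf.map (homOfLE (inf_le_inf_left (V i) inf_le_left : V i ⊓ (V j ⊓ V l) ≤ V i ⊓ V j)).op (g i j)
        * Y.presheaf.map (homOfLE (le_trans inf_le_right (le_refl _) : V i ⊓ (V j ⊓ V l) ≤ V j ⊓ V l)).op (g j l)
      = Y.presheaf.map (homOfLE (by
          exact le_inf inf_le_left (le_trans inf_le_right inf_le_right))).op (g i l))
    (hg'coc : ∀ i j l : ι,
      Y.presheaf.map (homOfLE (inf_le_inf_left (V i) inf_le_left : V i ⊓ (V j ⊓ V l) ≤ V i ⊓ V j)).op (g' i j)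
        * Y.presheaf.map (homOfLE (le_trans inf_le_right (le_refl _) : V i ⊓ (V j ⊓ V l) ≤ V j ⊓ V l)).op (g' j l)
      = Y.presheaf.map (homOfLE (by
          exact le_inf inf_le_left (le_trans inf_le_right inf_le_right))).op (g' i l))
    -- the isomorphism `α : η^*L ≅ η^*L'`, given by units on the pulled-back cover
    (a : ∀ i : ι, Γ(X, η ⁻¹ᵁ (V i)))
    (ha : ∀ i, IsUnit (a i))
    (hacomp : ∀ i j : ι,
      X.presheaf.map ((TopologicalSpace.Opens.map η.base).map (homOfLE (inf_le_left : V i ⊓ V j ≤ V i))).op (a i)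
          * η.app (V i ⊓ V j) (g' i j)
        = η.app (V i ⊓ V j) (g i j)
          * X.presheaf.map ((TopologicalSpace.Opens.map η.base).map (homOfLE (inf_le_right : V i ⊓ V j ≤ V j))).op (a j))
    -- `d₀^*α` and `d₁^*α` agree, i.e. the defining sections are constants
    (hconst : ∀ i, δ.d (η ⁻¹ᵁ (V i)) (a i) = 0) :
    ∃! b : ∀ i : ι, Γ(Y, V i),
      (∀ i, IsUnit (b i)) ∧
      (∀ i, η.app (V i) (b i) = a i) ∧
      (∀ i j : ι,
        Y.presheaf.map (homOfLE (inf_le_left : V i ⊓ V j ≤ V i)).op (b i) * g' i j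
          = g i j * Y.presheaf.map (homOfLE (inf_le_right : V i ⊓ V j ≤ V j)).op (b j)) := by
  have INJ : ∀ W : Y.Opens, Function.Injective (η.app W) := fun W =>
    eta_app_injective η d0 d1 hcoeq W (hsimple W)
  have DES : ∀ (W : Y.Opens) (s : Γ(X, η ⁻¹ᵁ W)), δ.d (η ⁻¹ᵁ W) s = 0 →
      ∃ b : Γ(Y, W), η.app W b = s := fun W s h =>
    eta_app_descent η d0 d1 hpre hcoeq W (hsimple W) s ((hδ _ s).mpr h)
  -- derivation kills 1 and inverses of constants
  have d_one : ∀ U : X.Opens, δ.d U 1 = 0 := by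
    intro U
    have h : δ.d U 1 = δ.d U 1 + δ.d U 1 := by simpa using δ.leibniz U 1 1
    exact add_eq_right.mp h.symm
  have d_inv : ∀ (U : X.Opens) (u c : Γ(X, U)), u * c = 1 → δ.d U u = 0 → δ.d U c = 0 := by
    intro U u c huc hu
    have h := δ.leibniz U u c
    rw [huc, d_one U, hu, mul_zero, add_zero] at h
    have hzero : u * δ.d U c = 0 := h.symm
    calc δ.d U c = (c * u) * δ.d U c := by rw [mul_comm c u, huc, one_mul]
    _ = c * (u * δ.d U c) := by ring
    _ = 0 := by rw [hzero, mul_zero]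
  -- the descended sections
  choose b hb using fun i => DES (V i) (a i) (hconst i)
  -- descended inverses
  have hinvs : ∀ i : ι, ∃ cinv : Γ(Y, V i), η.app (V i) cinv = ((ha i).unit⁻¹ : _) := by
    intro i
    refine DES (V i) _ (d_inv _ (a i) _ ?_ (hconst i))
    exact (ha i).unit.val_inv
  choose cc hcc using hinvs
  -- naturality of η.app in element form
  have nat : ∀ (U U' : Y.Opens) (h : U' ≤ U) (x : Γ(Y, U)),
      η.app U' (Y.presheaf.map (homOfLE h).op x)
        = X.presheaf.map ((TopologicalSpace.Opens.map η.base).map (homOfLE h)).op (η.app U x) := by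
    intro U U' h x
    have hm := ConcreteCategory.congr_hom (η.naturality (homOfLE h).op) x
    rw [CategoryTheory.comp_apply, CategoryTheory.comp_apply] at hm
    exact hm
  refine ⟨b, ⟨?_, hb, ?_⟩, ?_⟩
  · intro i
    refine IsUnit.of_mul_eq_one (a := b i) (cc i) (INJ (V i) ?_)
    rw [map_mul, hb, hcc, map_one]
    exact (ha i).unit.val_inv
  · intro i j
    apply INJ (V i ⊓ V j)
    rw [map_mul, map_mul, nat (V i) (V i ⊓ V j) inf_le_left (b i),
      nat (V j) (V i ⊓ V j) inf_le_right (b j), hb, hb]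
    exact hacomp i j
  · rintro b' ⟨-, hb'1, -⟩
    funext i
    exact INJ (V i) ((hb'1 i).trans (hb i).symm)
end
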